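/- For every n ≥ k ≥ 3 and every m with 0 ≤ m ≤ C(n,k), there exists a partition of 1 into n positive real lengths such that exactly m of the C(n,k) k-element subsets of pieces can form a (non-degenerate) k-gon. -/

import Mathlib

open Finset

/-- sums of distinct powers of 4 are distinct -/
theorem sum_pow4_inj : ∀ (N : ℕ) (A B : Finset ℕ), A ⊆ range N → B ⊆ range N →
    (∑ i ∈ A, 4^i = ∑ i ∈ B, 4^i) → A = B := by
  intro N
  induction N with
  | zero => intro A B hA hB _; simp_all [Finset.subset_empty]
  | succ N ih =>
    intro A B hA hB h
    have key : ∀ C : Finset ℕ, C ⊆ range (N+1) → N ∉ C → ∑ i ∈ C, 4^i < 4^N := by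
      intro C hC hN
      calc ∑ i ∈ C, 4^i ≤ ∑ i ∈ range N, 4^i := by
            apply Finset.sum_le_sum_of_subset
            intro x hx
            have := hC hx
            simp only [mem_range] at this ⊢
            rcases Nat.lt_succ_iff_lt_or_eq.mp this with h' | rfl
            · exact h'
            · exact absurd hx hN
        _ < 4^N := Nat.geomSum_lt (by norm_num) (by simp)
    by_cases hNA : N ∈ A <;> by_cases hNB : N ∈ B
    · have hA' : A.erase N ⊆ range N := by
        intro x hx
        have hxA := hA (Finset.mem_of_mem_erase hx)
        have := Finset.ne_of_mem_erase hx
        simp only [mem_range] at hxA ⊢; omega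
      have hB' : B.erase N ⊆ range N := by
        intro x hx
        have hxB := hB (Finset.mem_of_mem_erase hx)
        have := Finset.ne_of_mem_erase hx
        simp only [mem_range] at hxB ⊢; omega
      have hAe := Finset.add_sum_erase A (fun i => 4^i) hNA
      have hBe := Finset.add_sum_erase B (fun i => 4^i) hNB
      have : A.erase N = B.erase N := by
        apply ih _ _ hA' hB'
        beta_reduce at hAe hBe ⊢
        omega
      have := congrArg (insert N) this
      rwa [Finset.insert_erase hNA, Finset.insert_erase hNB] at this
    · exfalso
      have h1 : 4^N ≤ ∑ i ∈ A, 4^i := Finset.single_le_sum (f := fun i => 4^i) (fun _ _ => Nat.zero_le _) hNA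
      have h2 := key B hB hNB; omega
    · exfalso
      have h1 : 4^N ≤ ∑ i ∈ B, 4^i := Finset.single_le_sum (f := fun i => 4^i) (fun _ _ => Nat.zero_le _) hNB
      have h2 := key A hA hNA; omega
    · apply ih _ _ (fun x hx => ?_) (fun x hx => ?_) h
      · have := hA hx; simp only [mem_range] at this ⊢
        rcases Nat.lt_succ_iff_lt_or_eq.mp this with h' | rfl
        · exact h'
        · exact absurd hx hNA
      · have := hB hx; simp only [mem_range] at this ⊢
        rcases Nat.lt_succ_iff_lt_or_eq.mp this with h' | rfl
        · exact h'
        · exact absurd hx hNB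


theorem exists_threshold (s : Finset ℝ) : ∀ r : ℕ, r < s.card → ∃ M ∈ s,
    (s.filter (fun v => M < v)).card = r := by
  intro r
  induction r with
  | zero =>
    intro h
    have hne : s.Nonempty := Finset.card_pos.mp (by omega)
    refine ⟨s.max' hne, s.max'_mem hne, ?_⟩
    rw [Finset.card_eq_zero, Finset.filter_eq_empty_iff]
    intro v hv
    exact not_lt.mpr (s.le_max' v hv)
  | succ r ih =>
    intro h
    obtain ⟨M, hMs, hMc⟩ := ih (by omega)
    set u := s.filter (fun v => v < M) with hu
    have hsplit : s.card = r + 1 + u.card := by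
      have h1 : s.filter (fun v => ¬ M < v) = insert M u := by
        ext v
        simp only [hu, Finset.mem_filter, Finset.mem_insert, not_lt]
        constructor
        · rintro ⟨hv, hle⟩
          rcases lt_or_eq_of_le hle with h' | h'
          · exact Or.inr ⟨hv, h'⟩
          · exact Or.inl h'
        · rintro (rfl | ⟨hv, hlt⟩)
          · exact ⟨hMs, le_refl _⟩
          · exact ⟨hv, le_of_lt hlt⟩
      have h2 := Finset.card_filter_add_card_filter_not
        (s := s) (p := fun v => M < v)
      have h3 : (insert M u).card = u.card + 1 := by
        rw [Finset.card_insert_of_notMem]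
        simp [hu]
      rw [h1, h3, hMc] at h2
      omega
    have hune : u.Nonempty := Finset.card_pos.mp (by omega)
    refine ⟨u.max' hune, (Finset.mem_filter.mp (u.max'_mem hune)).1, ?_⟩
    have hM'M : u.max' hune < M := (Finset.mem_filter.mp (u.max'_mem hune)).2
    have heq : s.filter (fun v => u.max' hune < v) = insert M (s.filter (fun v => M < v)) := by
      ext v
      simp only [Finset.mem_filter, Finset.mem_insert]
      constructor
      · rintro ⟨hv, hlt⟩
        rcases lt_trichotomy v M with h' | rfl | h'
        · exact absurd (u.le_max' v (Finset.mem_filter.mpr ⟨hv, h'⟩)) (not_le.mpr hlt)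
        · exact Or.inl rfl
        · exact Or.inr ⟨hv, h'⟩
      · rintro (rfl | ⟨hv, hlt⟩)
        · exact ⟨hMs, hM'M⟩
        · exact ⟨hv, lt_trans hM'M hlt⟩
    rw [heq, Finset.card_insert_of_notMem (by simp), hMc]


theorem geom_lt_real (c : ℕ) (hc : 2 ≤ c) (d : ℕ) :
    ∑ t ∈ range d, (c:ℝ)^t < (c:ℝ)^d := by
  have h := Nat.geomSum_lt hc (fun i (hi : i ∈ range d) => mem_range.mp hi)
  have : ((∑ t ∈ range d, c^t : ℕ) : ℝ) < ((c^d : ℕ) : ℝ) := by exact_mod_cast h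
  simpa using this

theorem construction (n k p r : ℕ) (hk : 3 ≤ k) (hkp : k ≤ p) (hpn : p ≤ n)
    (hr : r ≤ (p-1).choose (k-1)) :
    ∃ a : Fin n → ℝ, (∀ i, 0 < a i) ∧ (∑ i, a i = 1) ∧
      ((Finset.univ.powersetCard k).filter
          (fun S : Finset (Fin n) => ∀ i ∈ S, a i < ∑ j ∈ S.erase i, a j)).card
        = (p-1).choose k + r := by
  classical
  have hp1n : p - 1 < n := by omega
  have hn3 : 3 ≤ n := by omega
  have hn0 : (0:ℝ) < n := by positivity
  have hnR : (2:ℝ) ≤ n := by exact_mod_cast (by omega : 2 ≤ n)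
  set s₀ : Fin n := ⟨p-1, hp1n⟩ with hs₀def
  set B : Finset (Fin n) := Finset.Iio s₀ with hBdef
  have hBcard : B.card = p - 1 := by simp [hBdef, Fin.card_Iio, hs₀def]
  have hmemB : ∀ i : Fin n, i ∈ B ↔ (i:ℕ) < p - 1 := by
    intro i; simp [hBdef, Finset.mem_Iio, Fin.lt_def, hs₀def]
  set δ : ℝ := ((4:ℝ)^n)⁻¹ with hδdef
  have hδpos : 0 < δ := by positivity
  set b : Fin n → ℝ := fun i => 1 + δ * 4^(i:ℕ) with hbdef
  have hb1 : ∀ i, 1 < b i := by intro i; simp only [hbdef]; nlinarith [pow_pos (by norm_num : (0:ℝ)<4) (i:ℕ)]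
  have hb2 : ∀ i, b i < 2 := by
    intro i
    have h4 : (4:ℝ)^(i:ℕ) < 4^n := by
      apply pow_lt_pow_right₀ (by norm_num) i.isLt
    have : δ * 4^(i:ℕ) < 1 := by
      rw [hδdef]
      rw [inv_mul_lt_iff₀ (by positivity)]
      simpa using h4
    simp only [hbdef]; linarith
  set σ : Finset (Fin n) → ℝ := fun T => ∑ i ∈ T, b i with hσdef
  have hσsplit : ∀ T : Finset (Fin n), σ T = T.card + δ * ∑ i ∈ T, (4:ℝ)^(i:ℕ) := by
    intro T
    simp only [hσdef, hbdef, Finset.sum_add_distrib, Finset.mul_sum, Finset.sum_const,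
      nsmul_eq_mul, mul_one]
  have hpow_cast : ∀ T : Finset (Fin n), ∑ i ∈ T, (4:ℝ)^(i:ℕ)
      = ((∑ x ∈ T.image Fin.val, 4^x : ℕ) : ℝ) := by
    intro T
    rw [Finset.sum_image (by simp [Fin.val_injective.eq_iff])]
    push_cast
    rfl
  have hpow_lt : ∀ T : Finset (Fin n), ∑ i ∈ T, (4:ℝ)^(i:ℕ) < 4^n := by
    intro T
    calc ∑ i ∈ T, (4:ℝ)^(i:ℕ) = ∑ x ∈ T.image Fin.val, (4:ℝ)^x := by
          rw [Finset.sum_image (by simp [Fin.val_injective.eq_iff])]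
      _ ≤ ∑ x ∈ range n, (4:ℝ)^x := by
          apply Finset.sum_le_sum_of_subset_of_nonneg
          · intro x hx
            obtain ⟨i, _, rfl⟩ := Finset.mem_image.mp hx
            exact mem_range.mpr i.isLt
          · intros; positivity
      _ < 4^n := geom_lt_real 4 (by norm_num) n
  have hσlb : ∀ T : Finset (Fin n), T.Nonempty → (T.card:ℝ) < σ T := by
    intro T hT
    have := Finset.sum_lt_sum_of_nonempty hT (f := fun _ => (1:ℝ)) (g := b) (fun i _ => hb1 i)
    simpa [hσdef] using this
  have hσub : ∀ T : Finset (Fin n), σ T < T.card + 1 := by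
    intro T
    have h1 : δ * ∑ i ∈ T, (4:ℝ)^(i:ℕ) < δ * 4^n := by
      exact mul_lt_mul_of_pos_left (hpow_lt T) hδpos
    have h2 : δ * (4:ℝ)^n = 1 := by rw [hδdef]; field_simp
    rw [hσsplit]; linarith
  have hσinj : ∀ T T' : Finset (Fin n), T.card = T'.card → σ T = σ T' → T = T' := by
    intro T T' hcard heq
    rw [hσsplit, hσsplit, hcard] at heq
    have h1 : ∑ i ∈ T, (4:ℝ)^(i:ℕ) = ∑ i ∈ T', (4:ℝ)^(i:ℕ) := by
      have := mul_left_cancel₀ (ne_of_gt hδpos) (by linarith : δ * ∑ i ∈ T, (4:ℝ)^(i:ℕ) = δ * ∑ i ∈ T', (4:ℝ)^(i:ℕ))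
      exact this
    rw [hpow_cast, hpow_cast] at h1
    have h2 : ∑ x ∈ T.image Fin.val, 4^x = ∑ x ∈ T'.image Fin.val, 4^x := by exact_mod_cast h1
    have h3 : T.image Fin.val = T'.image Fin.val := by
      apply sum_pow4_inj n _ _ ?_ ?_ h2
      · intro x hx; obtain ⟨i, _, rfl⟩ := Finset.mem_image.mp hx; exact mem_range.mpr i.isLt
      · intro x hx; obtain ⟨i, _, rfl⟩ := Finset.mem_image.mp hx; exact mem_range.mpr i.isLt
    exact Finset.image_injective Fin.val_injective h3
  set F : Finset (Finset (Fin n)) := B.powersetCard (k-1) with hFdef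
  have hFcard : F.card = (p-1).choose (k-1) := by
    rw [hFdef, Finset.card_powersetCard, hBcard]
  have hmemF : ∀ T, T ∈ F ↔ T ⊆ B ∧ T.card = k - 1 := by
    intro T; simp [hFdef, Finset.mem_powersetCard]
  have hσFlb : ∀ T ∈ F, (2:ℝ) < σ T := by
    intro T hT
    obtain ⟨hTB, hTc⟩ := (hmemF T).mp hT
    have hne : T.Nonempty := Finset.card_pos.mp (by omega)
    have := hσlb T hne
    have hc : (2:ℝ) ≤ (T.card : ℝ) := by
      rw [hTc]; exact_mod_cast (by omega : 2 ≤ k - 1)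
    linarith
  have hσFub : ∀ T ∈ F, σ T < n := by
    intro T hT
    obtain ⟨hTB, hTc⟩ := (hmemF T).mp hT
    have := hσub T
    have hc : ((T.card : ℝ) + 1) ≤ n := by
      rw [hTc]
      exact_mod_cast (by omega : k - 1 + 1 ≤ n)
    linarith
  -- choose the threshold M
  obtain ⟨M, hM2, hMn, hMcount⟩ : ∃ M : ℝ, 2 ≤ M ∧ M ≤ n ∧
      (F.filter (fun T => M < σ T)).card = r := by
    rcases eq_or_lt_of_le (hFcard ▸ hr) with hre | hrlt
    · refine ⟨2, le_refl _, hnR, ?_⟩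
      rw [Finset.filter_true_of_mem (fun T hT => hσFlb T hT), ← hre]
    · set s : Finset ℝ := F.image σ with hsdef
      have hinjF : Set.InjOn σ F := by
        intro T hT T' hT' heq
        exact hσinj T T' (by rw [((hmemF T).mp hT).2, ((hmemF T').mp hT').2] ) heq
      have hscard : s.card = F.card := Finset.card_image_of_injOn hinjF
      obtain ⟨M, hMs, hMc⟩ := exists_threshold s r (by omega)
      obtain ⟨T₀, hT₀, rfl⟩ := Finset.mem_image.mp hMs
      refine ⟨σ T₀, le_of_lt (hσFlb T₀ hT₀), le_of_lt (hσFub T₀ hT₀), ?_⟩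
      have himg : (F.filter (fun T => σ T₀ < σ T)).image σ
          = s.filter (fun v => σ T₀ < v) := by
        rw [hsdef]
        exact (Finset.filter_image (f := σ) (s := F) (p := fun v => σ T₀ < v)).symm
      have := Finset.card_image_of_injOn (f := σ)
        (hinjF.mono (Finset.filter_subset (fun T => σ T₀ < σ T) F))
      rw [himg, hMc] at this
      exact this.symm
  -- the lengths
  set a : Fin n → ℝ := fun i =>
    if (i:ℕ) < p - 1 then b i else if (i:ℕ) = p - 1 then M else (n:ℝ)^2 * 3^(i:ℕ)
    with hadef
  have haB : ∀ i ∈ B, a i = b i := by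
    intro i hi; simp [hadef, (hmemB i).mp hi]
  have has0 : a s₀ = M := by simp [hadef, hs₀def]
  have hahuge : ∀ i : Fin n, p ≤ (i:ℕ) → a i = (n:ℝ)^2 * 3^(i:ℕ) := by
    intro i hi
    have h1 : ¬ ((i:ℕ) < p - 1) := by omega
    have h2 : ¬ ((i:ℕ) = p - 1) := by omega
    simp [hadef, h1, h2]
  have hapos : ∀ i, 0 < a i := by
    intro i
    simp only [hadef]
    split
    · linarith [hb1 i]
    · split
      · linarith
      · positivity
  have haup : ∀ i : Fin n, a i ≤ (n:ℝ)^2 * 3^(i:ℕ) := by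
    intro i
    have h3 : (1:ℝ) ≤ 3^(i:ℕ) := one_le_pow₀ (by norm_num)
    have hn2 : (n:ℝ) ≤ (n:ℝ)^2 := by nlinarith
    simp only [hadef]
    split
    · nlinarith [hb2 i]
    · split
      · nlinarith
      · exact le_refl _

  -- characterization of good subsets
  set good : Finset (Fin n) → Prop :=
    fun S => ∀ i ∈ S, a i < ∑ j ∈ S.erase i, a j with hgooddef
  have hchar : ∀ S : Finset (Fin n), S.card = k →
      (good S ↔ (S ⊆ B ∨ (s₀ ∈ S ∧ S.erase s₀ ⊆ B ∧ M < σ (S.erase s₀)))) := by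
    intro S hScard
    have hSne : S.Nonempty := Finset.card_pos.mp (by omega)
    constructor
    · intro hgood
      set j := S.max' hSne with hjdef
      have hjS : j ∈ S := S.max'_mem hSne
      have hjp : (j:ℕ) < p := by
        by_contra hcon
        push_neg at hcon
        have haj : a j = (n:ℝ)^2 * 3^(j:ℕ) := hahuge j hcon
        have hsum : ∑ i ∈ S.erase j, a i < a j := by
          calc ∑ i ∈ S.erase j, a i
              ≤ ∑ i ∈ S.erase j, (n:ℝ)^2 * 3^(i:ℕ) := Finset.sum_le_sum (fun i _ => haup i)
            _ = ∑ x ∈ (S.erase j).image Fin.val, (n:ℝ)^2 * 3^x := by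
                rw [Finset.sum_image (by simp [Fin.val_injective.eq_iff])]
            _ ≤ ∑ x ∈ range (j:ℕ), (n:ℝ)^2 * 3^x := by
                apply Finset.sum_le_sum_of_subset_of_nonneg
                · intro x hx
                  obtain ⟨i, hi, rfl⟩ := Finset.mem_image.mp hx
                  have hij : i ≤ j := S.le_max' i (Finset.mem_of_mem_erase hi)
                  have hinej : i ≠ j := Finset.ne_of_mem_erase hi
                  rw [mem_range]
                  exact lt_of_le_of_ne (Fin.le_def.mp hij) (fun h => hinej (Fin.ext h))
                · intros; positivity
            _ = (n:ℝ)^2 * ∑ x ∈ range (j:ℕ), (3:ℝ)^x := by rw [Finset.mul_sum]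
            _ < (n:ℝ)^2 * 3^(j:ℕ) := by
                apply mul_lt_mul_of_pos_left (geom_lt_real 3 (by norm_num) _) (by positivity)
            _ = a j := haj.symm
        exact absurd (hgood j hjS) (not_lt.mpr (le_of_lt hsum))
      have hallp : ∀ i ∈ S, (i:ℕ) < p := by
        intro i hi
        have : i ≤ j := S.le_max' i hi
        exact lt_of_le_of_lt (Fin.le_def.mp this) hjp
      by_cases hs0 : s₀ ∈ S
      · right
        have hTB : S.erase s₀ ⊆ B := by
          intro i hi
          have hiS := Finset.mem_of_mem_erase hi
          have hine := Finset.ne_of_mem_erase hi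
          rw [hmemB]
          have h1 := hallp i hiS
          have h2 : (i:ℕ) ≠ p - 1 := fun h => hine (Fin.ext (by simp [hs₀def, h]))
          omega
        refine ⟨hs0, hTB, ?_⟩
        have := hgood s₀ hs0
        rw [has0] at this
        have heq : ∑ j ∈ S.erase s₀, a j = σ (S.erase s₀) := by
          rw [hσdef]
          exact Finset.sum_congr rfl (fun i hi => haB i (hTB hi))
        rwa [heq] at this
      · left
        intro i hi
        rw [hmemB]
        have h1 := hallp i hi
        have h2 : (i:ℕ) ≠ p - 1 := by
          intro h
          exact hs0 (by rwa [show s₀ = i from Fin.ext (by simp [hs₀def, h])])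
        omega
    · rintro (hsub | ⟨hs0, hTB, hTM⟩)
      · intro i hi
        have hcard : (S.erase i).card = k - 1 := by rw [Finset.card_erase_of_mem hi, hScard]
        have hne : (S.erase i).Nonempty := Finset.card_pos.mp (by omega)
        have hlb : ((S.erase i).card : ℝ) < ∑ j ∈ S.erase i, a j := by
          have := Finset.sum_lt_sum_of_nonempty hne (f := fun _ => (1:ℝ)) (g := a)
            (fun j hj => by
              rw [haB j (hsub (Finset.mem_of_mem_erase hj))]
              exact hb1 j)
          simpa using this
        have h2k : (2:ℝ) ≤ ((S.erase i).card : ℝ) := by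
          rw [hcard]; exact_mod_cast (by omega : 2 ≤ k - 1)
        have := hb2 i
        rw [haB i (hsub hi)]
        linarith
      · intro i hi
        by_cases hieq : i = s₀
        · rw [hieq, has0]
          have heq : ∑ j ∈ S.erase s₀, a j = σ (S.erase s₀) := by
            rw [hσdef]
            exact Finset.sum_congr rfl (fun j hj => haB j (hTB hj))
          rw [heq]
          exact hTM
        · have hiT : i ∈ S.erase s₀ := Finset.mem_erase.mpr ⟨hieq, hi⟩
          have hib : a i = b i := haB i (hTB hiT)
          have hs0e : s₀ ∈ S.erase i := Finset.mem_erase.mpr ⟨fun h => hieq h.symm, hs0⟩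
          have hMle : M ≤ ∑ j ∈ S.erase i, a j := by
            have := Finset.single_le_sum (f := a) (fun j _ => le_of_lt (hapos j)) hs0e
            rwa [has0] at this
          have := hb2 i
          rw [hib]
          linarith
  -- counting
  have hs0B : s₀ ∉ B := by simp [hBdef]
  have hG : (univ.powersetCard k).filter good
      = (B.powersetCard k) ∪ ((F.filter (fun T => M < σ T)).image (insert s₀)) := by
    ext S
    constructor
    · intro hS
      obtain ⟨hSp, hgood⟩ := Finset.mem_filter.mp hS
      have hScard : S.card = k := (Finset.mem_powersetCard.mp hSp).2
      rcases (hchar S hScard).mp hgood with hsub | ⟨hs0, hTB, hTM⟩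
      · exact Finset.mem_union_left _ (Finset.mem_powersetCard.mpr ⟨hsub, hScard⟩)
      · apply Finset.mem_union_right
        apply Finset.mem_image.mpr
        refine ⟨S.erase s₀, Finset.mem_filter.mpr ⟨(hmemF _).mpr ⟨hTB, ?_⟩, hTM⟩,
          Finset.insert_erase hs0⟩
        rw [Finset.card_erase_of_mem hs0, hScard]
    · intro hS
      rcases Finset.mem_union.mp hS with h1 | h2
      · obtain ⟨hsub, hScard⟩ := Finset.mem_powersetCard.mp h1
        exact Finset.mem_filter.mpr ⟨Finset.mem_powersetCard.mpr
          ⟨Finset.subset_univ S, hScard⟩, (hchar S hScard).mpr (Or.inl hsub)⟩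
      · obtain ⟨T, hT, rfl⟩ := Finset.mem_image.mp h2
        obtain ⟨hTF, hTM⟩ := Finset.mem_filter.mp hT
        obtain ⟨hTB, hTc⟩ := (hmemF T).mp hTF
        have hs0T : s₀ ∉ T := fun h => hs0B (hTB h)
        have hcard : (insert s₀ T).card = k := by
          rw [Finset.card_insert_of_notMem hs0T, hTc]; omega
        refine Finset.mem_filter.mpr ⟨Finset.mem_powersetCard.mpr
          ⟨Finset.subset_univ _, hcard⟩,
          (hchar _ hcard).mpr (Or.inr ⟨Finset.mem_insert_self _ _, ?_, ?_⟩)⟩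
        · rw [Finset.erase_insert hs0T]; exact hTB
        · rw [Finset.erase_insert hs0T]; exact hTM
  have hdisj : Disjoint (B.powersetCard k)
      ((F.filter (fun T => M < σ T)).image (insert s₀)) := by
    rw [Finset.disjoint_left]
    intro S hS1 hS2
    obtain ⟨T, hT, rfl⟩ := Finset.mem_image.mp hS2
    have hsub := (Finset.mem_powersetCard.mp hS1).1
    exact hs0B (hsub (Finset.mem_insert_self _ _))
  have hGcard : ((univ.powersetCard k).filter good).card = (p-1).choose k + r := by
    rw [hG, Finset.card_union_of_disjoint hdisj]
    congr 1
    · rw [Finset.card_powersetCard, hBcard]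
    · rw [← hMcount]
      apply Finset.card_image_of_injOn
      intro T hT T' hT' heq
      have hs0T : s₀ ∉ T := fun h =>
        hs0B (((hmemF T).mp (Finset.mem_filter.mp hT).1).1 h)
      have hs0T' : s₀ ∉ T' := fun h =>
        hs0B (((hmemF T').mp (Finset.mem_filter.mp hT').1).1 h)
      have := congrArg (Finset.erase · s₀) heq
      simpa [Finset.erase_insert hs0T, Finset.erase_insert hs0T'] using this
  -- normalization
  set tot : ℝ := ∑ i, a i with htotdef
  have htot : 0 < tot := by
    have : Nonempty (Fin n) := ⟨s₀⟩
    rw [htotdef]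
    apply Finset.sum_pos (fun i _ => hapos i)
    exact Finset.univ_nonempty
  refine ⟨fun i => a i / tot, fun i => div_pos (hapos i) htot, ?_, ?_⟩
  · rw [← Finset.sum_div, ← htotdef, div_self (ne_of_gt htot)]
  · rw [← hGcard]
    congr 1
    apply Finset.filter_congr
    intro S _
    constructor
    · intro h i hi
      have := h i hi
      rwa [← Finset.sum_div, div_lt_div_iff_of_pos_right htot] at this
    · intro h i hi
      rw [← Finset.sum_div, div_lt_div_iff_of_pos_right htot]
      exact h i hi

/-- For every `n ≥ k ≥ 3` and every `0 ≤ m ≤ C(n,k)` there is a partition of `1`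
into `n` positive lengths such that exactly `m` of the `k`-element subsets of the
pieces can form a non-degenerate `k`-gon (i.e. every piece in the subset is strictly
smaller than the sum of the other `k−1` pieces). -/
theorem exists_partition_with_exactly_m_kgons (n k m : ℕ)
    (hk : 3 ≤ k) (hkn : k ≤ n) (hm : m ≤ n.choose k) :
    ∃ a : Fin n → ℝ, (∀ i, 0 < a i) ∧ (∑ i, a i = 1) ∧
      ((Finset.univ.powersetCard k).filter
          (fun S : Finset (Fin n) => ∀ i ∈ S, a i < ∑ j ∈ S.erase i, a j)).card = m := by
  have hP : ∃ q : ℕ, m ≤ q.choose k := ⟨n, hm⟩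
  set q := Nat.find hP with hqdef
  have hq : m ≤ q.choose k := Nat.find_spec hP
  have hqn : q ≤ n := Nat.find_min' hP hm
  set p := max k q with hpdef
  have hkp : k ≤ p := le_max_left _ _
  have hpn : p ≤ n := max_le hkn hqn
  have hmp : m ≤ p.choose k := le_trans hq (Nat.choose_le_choose k (le_max_right _ _))
  have hlow : (p-1).choose k ≤ m := by
    by_cases hqk : q ≤ k
    · have hpk : p = k := max_eq_left hqk
      have : (p-1).choose k = 0 := Nat.choose_eq_zero_of_lt (by omega)
      omega
    · have hpq : p = q := max_eq_right (by omega)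
      have hmin : ¬ m ≤ (p-1).choose k := Nat.find_min hP (by omega)
      omega
  have hpascal : p.choose k = (p-1).choose (k-1) + (p-1).choose k := by
    have h1 : p = (p-1) + 1 := by omega
    have h2 : k = (k-1) + 1 := by omega
    rw [h1, h2, Nat.choose_succ_succ]
    simp only [Nat.add_sub_cancel, Nat.succ_eq_add_one, ← h2]
  have hr : m - (p-1).choose k ≤ (p-1).choose (k-1) := by omega
  obtain ⟨a, h1, h2, h3⟩ := construction n k p (m - (p-1).choose k) hk hkp hpn hr
  exact ⟨a, h1, h2, by omega⟩
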